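/- Let n be odd, h be odd, h ≥ 2, n ≥ 1, and suppose h > n + 2. Then for any vertex u ∈ V^0_0 of ZT(n,h), the sum of the distances from u to the vertices of V^1_n equals d(u, V^1_n) = ½(h² + 2hn + n² + 2n). -/

import Mathlib

open SimpleGraph

/-- Vertices of the zig-zag tubulene `ZT(n,h)`: a vertex `v^k_{i,j}` is the triple
`(k, i, j)` with `k ∈ {0,1}` the type, `0 ≤ i ≤ n` the layer, and `j ∈ ℤ_h`. -/
abbrev ZTVert (n h : ℕ) := Fin 2 × Fin (n + 1) × ZMod h

/-- The zig-zag tubulene `ZT(n,h)`: edges are `v^0_{i,j} ~ v^1_{i,j}`,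
`v^1_{i,j} ~ v^0_{i,j+1}` (second index modulo `h`) and `v^1_{i,j} ~ v^0_{i+1,j}`. -/
def ZT (n h : ℕ) : SimpleGraph (ZTVert n h) :=
  SimpleGraph.fromRel (fun a b =>
    (a.1 = 0 ∧ b.1 = 1 ∧ a.2.1 = b.2.1 ∧ a.2.2 = b.2.2) ∨
    (a.1 = 1 ∧ b.1 = 0 ∧ a.2.1 = b.2.1 ∧ b.2.2 = a.2.2 + 1) ∨
    (a.1 = 1 ∧ b.1 = 0 ∧ (b.2.1 : ℕ) = (a.2.1 : ℕ) + 1 ∧ a.2.2 = b.2.2))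

/-- The set `V^k_i` of vertices of type `k` in layer `i` of `ZT(n,h)`. -/
def ZTVset (n h : ℕ) (k : Fin 2) (i : ℕ) : Set (ZTVert n h) :=
  {v | v.1 = k ∧ (v.2.1 : ℕ) = i}

section ZTAux

variable {n h : ℕ}

/-- type as integer -/
def kap (v : ZTVert n h) : ℤ := v.1.val
/-- layer as integer -/
def lay (v : ZTVert n h) : ℤ := v.2.1.val
/-- integer lift of the j-displacement of a step -/
def iot (x z : ZTVert n h) : ℤ :=
  if z.2.2 = x.2.2 then 0 else if z.2.2 = x.2.2 + 1 then 1 else -1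

lemma ZT_adj1 (i : Fin (n+1)) (c : ZMod h) : (ZT n h).Adj (0, i, c) (1, i, c) := by
  rw [ZT, SimpleGraph.fromRel_adj]
  exact ⟨by simp [Prod.ext_iff],
    Or.inl (Or.inl ⟨rfl, rfl, rfl, rfl⟩)⟩

lemma ZT_adj2 (i : Fin (n+1)) (c : ZMod h) : (ZT n h).Adj (1, i, c) (0, i, c + 1) := by
  rw [ZT, SimpleGraph.fromRel_adj]
  exact ⟨by simp [Prod.ext_iff],
    Or.inl (Or.inr (Or.inl ⟨rfl, rfl, rfl, rfl⟩))⟩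

lemma ZT_adj3 (i i' : Fin (n+1)) (hii : (i' : ℕ) = (i : ℕ) + 1) (c : ZMod h) :
    (ZT n h).Adj (1, i, c) (0, i', c) := by
  rw [ZT, SimpleGraph.fromRel_adj]
  exact ⟨by simp [Prod.ext_iff],
    Or.inl (Or.inr (Or.inr ⟨rfl, rfl, hii, rfl⟩))⟩

lemma ZT_step (hh3 : 3 < h) {x z : ZTVert n h} (hadj : (ZT n h).Adj x z) :
    kap z = 1 - kap x ∧
    ((iot x z : ZMod h) = z.2.2 - x.2.2) ∧
    lay z - lay x + iot x z ≤ kap x ∧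
    -(iot x z) ≤ 1 - kap x ∧
    lay z - lay x ≤ kap x ∧
    (kap x = 0 ∨ kap x = 1) := by
  haveI : NeZero h := ⟨by omega⟩
  haveI : Fact (1 < h) := ⟨by omega⟩
  have h1 : (1 : ZMod h) ≠ 0 := by
    intro hcon
    have := congrArg ZMod.val hcon
    rw [ZMod.val_one, ZMod.val_zero] at this
    omega
  have h2 : (2 : ZMod h) ≠ 0 := by
    intro hcon
    have h2' : ((2 : ℕ) : ZMod h) = 0 := by push_cast; exact hcon
    have := congrArg ZMod.val h2'
    rw [ZMod.val_cast_of_lt (by omega), ZMod.val_zero] at this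
    omega
  rw [ZT, SimpleGraph.fromRel_adj] at hadj
  obtain ⟨xk, xi, xc⟩ := x
  obtain ⟨zk, zi, zc⟩ := z
  obtain ⟨hne, hrel⟩ := hadj
  simp only at hrel
  rcases hrel with (⟨e1,e2,e3,e4⟩|⟨e1,e2,e3,e4⟩|⟨e1,e2,e3,e4⟩)|(⟨e1,e2,e3,e4⟩|⟨e1,e2,e3,e4⟩|⟨e1,e2,e3,e4⟩)
  · -- x type 0, z type 1, same layer, same j
    subst e1 e2 e3 e4
    refine ⟨rfl, by simp [iot], ?_, ?_, ?_, Or.inl rfl⟩ <;> simp [iot, kap, lay]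
  · -- x type 1, z type 0, same layer, zc = xc + 1
    subst e1 e2 e3
    have hic : zc ≠ xc := by
      intro hcon; exact h1 (by linear_combination hcon - e4)
    have hiot : iot ((1 : Fin 2), xi, xc) ((0 : Fin 2), xi, zc) = 1 := by
      simp only [iot]; rw [if_neg hic, if_pos e4]
    refine ⟨by norm_num [kap], ?_, ?_, ?_, ?_, Or.inr (by norm_num [kap])⟩
    · rw [hiot]; push_cast; linear_combination -e4
    · rw [hiot]; norm_num [kap, lay]
    · rw [hiot]; norm_num [kap]
    · norm_num [kap, lay]
  · -- x type 1, z type 0, layer up, same j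
    subst e1 e2 e4
    refine ⟨rfl, by simp [iot], ?_, ?_, ?_, Or.inr rfl⟩ <;>
      simp [iot, kap, lay, e3]
  · -- reversed: z type 0, x type 1, same layer, same j
    subst e1 e2 e3 e4
    refine ⟨rfl, by simp [iot], ?_, ?_, ?_, Or.inr rfl⟩ <;> simp [iot, kap, lay]
  · -- reversed: z type 1, x type 0, same layer, xc = zc + 1
    subst e1 e2 e3
    have hic1 : zc ≠ xc := by
      intro hcon; exact h1 (by linear_combination -e4 - hcon)
    have hic2 : zc ≠ xc + 1 := by
      intro hcon; exact h2 (by linear_combination -e4 - hcon)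
    have hiot : iot ((0 : Fin 2), zi, xc) ((1 : Fin 2), zi, zc) = -1 := by
      simp only [iot]; rw [if_neg hic1, if_neg hic2]
    refine ⟨by norm_num [kap], ?_, ?_, ?_, ?_, Or.inl (by norm_num [kap])⟩
    · rw [hiot]; push_cast; linear_combination e4
    · rw [hiot]; norm_num [kap, lay]
    · rw [hiot]; norm_num [kap]
    · norm_num [kap, lay]
  · -- reversed: z type 1, x type 0, layer down (x = z+1), same j
    subst e1 e2 e4
    refine ⟨rfl, by simp [iot], ?_, ?_, ?_, Or.inl rfl⟩ <;>
      simp [iot, kap, lay, e3]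


lemma walk_bound (hh3 : 3 < h) {x y : ZTVert n h} (w : (ZT n h).Walk x y) :
    ∃ p q : ℕ, ∃ D : ℤ,
      (p : ℤ) + q = w.length ∧
      (p : ℤ) - q = kap y - kap x ∧
      ((D : ZMod h) = y.2.2 - x.2.2) ∧
      lay y - lay x + D ≤ q ∧
      -D ≤ p ∧
      lay y - lay x ≤ q := by
  induction w with
  | nil =>
      exact ⟨0, 0, 0, by simp, by simp, by simp, by simp, by simp, by simp⟩
  | @cons x z y hadj w ih =>
      obtain ⟨p, q, D, h1, h2, h3, h4, h5, h6⟩ := ih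
      obtain ⟨s1, s2, s3, s4, s5, s6⟩ := ZT_step hh3 hadj
      have hcast : ((D + iot x z : ℤ) : ZMod h) = y.2.2 - x.2.2 := by
        push_cast
        rw [h3, s2]
        ring
      simp only [SimpleGraph.Walk.length_cons]
      rcases s6 with hk | hk
      · exact ⟨p + 1, q, D + iot x z, by push_cast; omega, by push_cast; omega, hcast,
          by omega, by omega, by omega⟩
      · exact ⟨p, q + 1, D + iot x z, by push_cast; omega, by push_cast; omega, hcast,
          by omega, by omega, by omega⟩


lemma reach_fwd (a : ZMod h) :
    ∀ (k : ℕ) (hk : k < n + 1) (s : ℕ),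
      ∃ w : (ZT n h).Walk (0, ⟨0, Nat.succ_pos n⟩, a) (0, ⟨k, hk⟩, a + (s : ℕ)),
        w.length = 2 * (k + s) := by
  intro k hk
  induction k with
  | zero =>
      intro s
      induction s with
      | zero => exact ⟨(SimpleGraph.Walk.nil).copy rfl (by norm_num), (SimpleGraph.Walk.length_copy _ _ _).trans rfl⟩
      | succ s ihs =>
          obtain ⟨w, hw⟩ := ihs
          refine ⟨(w.append ((SimpleGraph.Walk.cons (ZT_adj1 _ _)
            (SimpleGraph.Walk.cons (ZT_adj2 _ _) SimpleGraph.Walk.nil)))).copy rfl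
            (by push_cast; ring_nf), ?_⟩
          refine (SimpleGraph.Walk.length_copy _ _ _).trans ?_
          refine (SimpleGraph.Walk.length_append _ _).trans ?_
          refine (congrArg₂ (· + ·) hw (rfl : _ = 2)).trans ?_
          omega
  | succ k ihk =>
      intro s
      obtain ⟨w, hw⟩ := ihk (by omega) s
      refine ⟨(w.append ((SimpleGraph.Walk.cons (ZT_adj1 _ _)
        (SimpleGraph.Walk.cons (ZT_adj3 ⟨k, by omega⟩ ⟨k+1, hk⟩ rfl _)
          SimpleGraph.Walk.nil)))), ?_⟩
      refine (SimpleGraph.Walk.length_append _ _).trans ?_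
      refine (congrArg₂ (· + ·) hw (rfl : _ = 2)).trans ?_
      omega

lemma reach_back (a : ZMod h) :
    ∀ (k : ℕ) (hk : k < n + 1) (s : ℕ),
      ∃ w : (ZT n h).Walk (0, ⟨0, Nat.succ_pos n⟩, a) (0, ⟨k, hk⟩, a - (s : ℕ)),
        w.length = 2 * max k s := by
  have adjL : ∀ (i : Fin (n+1)) (c : ZMod h), (ZT n h).Adj (0, i, c) (1, i, c - 1) := by
    intro i c
    have := (ZT_adj2 i (c - 1)).symm
    simpa using this
  intro k hk
  induction k with
  | zero =>
      intro s
      induction s with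
      | zero => exact ⟨(SimpleGraph.Walk.nil).copy rfl (by norm_num), (SimpleGraph.Walk.length_copy _ _ _).trans rfl⟩
      | succ s ihs =>
          obtain ⟨w, hw⟩ := ihs
          refine ⟨(w.append ((SimpleGraph.Walk.cons (adjL _ _)
            (SimpleGraph.Walk.cons ((ZT_adj1 _ _).symm) SimpleGraph.Walk.nil)))).copy rfl
            (by push_cast; ring_nf), ?_⟩
          refine (SimpleGraph.Walk.length_copy _ _ _).trans ?_
          refine (SimpleGraph.Walk.length_append _ _).trans ?_
          refine (congrArg₂ (· + ·) hw (rfl : _ = 2)).trans ?_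
          omega
  | succ k ihk =>
      intro s
      cases s with
      | zero =>
          obtain ⟨w, hw⟩ := ihk (by omega) 0
          refine ⟨(w.append ((SimpleGraph.Walk.cons (ZT_adj1 _ _)
            (SimpleGraph.Walk.cons (ZT_adj3 ⟨k, by omega⟩ ⟨k+1, hk⟩ rfl _)
              SimpleGraph.Walk.nil)))), ?_⟩
          refine (SimpleGraph.Walk.length_append _ _).trans ?_
          refine (congrArg₂ (· + ·) hw (rfl : _ = 2)).trans ?_
          omega
      | succ s =>
          obtain ⟨w, hw⟩ := ihk (by omega) s
          refine ⟨(w.append ((SimpleGraph.Walk.cons (adjL _ _)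
            (SimpleGraph.Walk.cons (ZT_adj3 ⟨k, by omega⟩ ⟨k+1, hk⟩ rfl _)
              SimpleGraph.Walk.nil)))).copy rfl (by push_cast; ring_nf), ?_⟩
          refine (SimpleGraph.Walk.length_copy _ _ _).trans ?_
          refine (SimpleGraph.Walk.length_append _ _).trans ?_
          refine (congrArg₂ (· + ·) hw (rfl : _ = 2)).trans ?_
          omega


lemma dist_formula (hn : 1 ≤ n) (hgt : n + 2 < h) (a b : ZMod h) :
    ((ZT n h).dist (0, ⟨0, Nat.succ_pos n⟩, a) (1, ⟨n, Nat.lt_succ_self n⟩, b) : ℤ) =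
      max (2*(n:ℤ)+1) (min (2*(n:ℤ) + 2*((b-a).val : ℤ) + 1)
        (2*(h:ℤ) - 2*((b-a).val : ℤ) - 1)) := by
  haveI : NeZero h := ⟨by omega⟩
  set j : ℕ := (b - a).val with hjdef
  have hj : j < h := ZMod.val_lt _
  have hjc : ((j : ℕ) : ZMod h) = b - a := ZMod.natCast_rightInverse (b - a)
  -- forward walk
  obtain ⟨w1, hw1⟩ := reach_fwd (n := n) (h := h) a n (Nat.lt_succ_self n) j
  have he1 : ((0 : Fin 2), (⟨n, Nat.lt_succ_self n⟩ : Fin (n+1)), a + (j : ℕ))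
      = ((0 : Fin 2), (⟨n, Nat.lt_succ_self n⟩ : Fin (n+1)), b) := by
    have : a + ((j : ℕ) : ZMod h) = b := by rw [hjc]; ring
    rw [this]
  let w1' := (w1.copy rfl he1).append
    (SimpleGraph.Walk.cons (ZT_adj1 ⟨n, Nat.lt_succ_self n⟩ b) SimpleGraph.Walk.nil)
  have hub1 : (ZT n h).dist (0, ⟨0, Nat.succ_pos n⟩, a) (1, ⟨n, Nat.lt_succ_self n⟩, b)
      ≤ 2 * (n + j) + 1 := by
    have hle := SimpleGraph.dist_le w1'
    simp only [w1', SimpleGraph.Walk.length_append, SimpleGraph.Walk.length_copy,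
      SimpleGraph.Walk.length_cons, SimpleGraph.Walk.length_nil, hw1] at hle
    omega
  -- backward walk
  obtain ⟨w2, hw2⟩ := reach_back (n := n) (h := h) a n (Nat.lt_succ_self n) (h - j - 1)
  have he2 : ((0 : Fin 2), (⟨n, Nat.lt_succ_self n⟩ : Fin (n+1)), a - ((h - j - 1 : ℕ) : ZMod h))
      = ((0 : Fin 2), (⟨n, Nat.lt_succ_self n⟩ : Fin (n+1)), b + 1) := by
    have hcast : ((h - j - 1 : ℕ) : ZMod h) = 0 - (j : ZMod h) - 1 := by
      rw [Nat.cast_sub (by omega), Nat.cast_sub (by omega), ZMod.natCast_self]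
      norm_num
    have : a - ((h - j - 1 : ℕ) : ZMod h) = b + 1 := by
      rw [hcast]; linear_combination hjc
    rw [this]
  let w2' := (w2.copy rfl he2).append
    (SimpleGraph.Walk.cons ((ZT_adj2 ⟨n, Nat.lt_succ_self n⟩ b).symm) SimpleGraph.Walk.nil)
  have hub2 : (ZT n h).dist (0, ⟨0, Nat.succ_pos n⟩, a) (1, ⟨n, Nat.lt_succ_self n⟩, b)
      ≤ 2 * max n (h - j - 1) + 1 := by
    have hle := SimpleGraph.dist_le w2'
    simp only [w2', SimpleGraph.Walk.length_append, SimpleGraph.Walk.length_copy,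
      SimpleGraph.Walk.length_cons, SimpleGraph.Walk.length_nil, hw2] at hle
    omega
  -- lower bound
  have hreach : (ZT n h).Reachable (0, ⟨0, Nat.succ_pos n⟩, a)
      (1, ⟨n, Nat.lt_succ_self n⟩, b) := ⟨w1'⟩
  obtain ⟨wd, hwd⟩ := hreach.exists_walk_length_eq_dist
  obtain ⟨p, q, D, b1, b2, b3, b4, b5, b6⟩ := walk_bound (by omega) wd
  rw [hwd] at b1
  simp only [kap, lay] at b2 b4 b6
  norm_num at b2 b4 b6
  have hDj : ((D - (j:ℤ) : ℤ) : ZMod h) = 0 := by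
    push_cast
    rw [b3, hjc]
    ring
  rw [ZMod.intCast_zmod_eq_zero_iff_dvd] at hDj
  obtain ⟨t, ht⟩ := hDj
  have key : (j : ℤ) ≤ D ∨ D ≤ (j : ℤ) - h := by
    rcases le_or_gt 0 t with h0 | h0
    · left; nlinarith
    · right; nlinarith
  omega

end ZTAux

lemma sum_linear (α β : ℤ) : ∀ m : ℕ,
    2 * ∑ k ∈ Finset.range m, (α + β * (k : ℤ)) = 2 * (m : ℤ) * α + β * ((m : ℤ) * ((m : ℤ) - 1))
  | 0 => by simp
  | (m + 1) => by
      rw [Finset.sum_range_succ, mul_add, sum_linear α β m]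
      push_cast
      ring

lemma sum_formula (n h : ℕ) (hn : 1 ≤ n) (hnodd : Odd n) (hhodd : Odd h) (hgt : n + 2 < h) :
    2 * ∑ j ∈ Finset.range h,
        max (2*(n:ℤ)+1) (min (2*(n:ℤ) + 2*(j:ℤ) + 1) (2*(h:ℤ) - 2*(j:ℤ) - 1))
      = (h:ℤ)^2 + 2*(h:ℤ)*(n:ℤ) + (n:ℤ)^2 + 2*(n:ℤ) := by
  obtain ⟨n', rfl⟩ := hnodd
  obtain ⟨h', rfl⟩ := hhodd
  obtain ⟨A, rfl⟩ : ∃ A, h' = n' + A := ⟨h' - n', by omega⟩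
  have hA : 2 ≤ A := by omega
  rw [Finset.range_eq_Ico,
    ← Finset.sum_Ico_consecutive _ (Nat.zero_le A) (show A ≤ 2*(n'+A)+1 by omega),
    ← Finset.sum_Ico_consecutive _ (show A ≤ 2*A by omega) (show 2*A ≤ 2*(n'+A)+1 by omega)]
  have e1 : ∑ j ∈ Finset.Ico 0 A,
      max (2*((2*n'+1 : ℕ):ℤ)+1) (min (2*((2*n'+1 : ℕ):ℤ) + 2*(j:ℤ) + 1)
        (2*((2*(n'+A)+1 : ℕ):ℤ) - 2*(j:ℤ) - 1))
      = ∑ k ∈ Finset.range A, ((4*(n':ℤ)+3) + 2 * (k:ℤ)) := by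
    rw [← Finset.range_eq_Ico]
    refine Finset.sum_congr rfl fun j hj => ?_
    rw [Finset.mem_range] at hj
    push_cast
    omega
  have e2 : ∑ j ∈ Finset.Ico A (2*A),
      max (2*((2*n'+1 : ℕ):ℤ)+1) (min (2*((2*n'+1 : ℕ):ℤ) + 2*(j:ℤ) + 1)
        (2*((2*(n'+A)+1 : ℕ):ℤ) - 2*(j:ℤ) - 1))
      = ∑ k ∈ Finset.range A, ((4*(n':ℤ) + 2*(A:ℤ) + 1) + (-2) * (k:ℤ)) := by
    rw [Finset.sum_Ico_eq_sum_range, show 2*A - A = A by omega]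
    refine Finset.sum_congr rfl fun k hk => ?_
    rw [Finset.mem_range] at hk
    push_cast
    omega
  have e3 : ∑ j ∈ Finset.Ico (2*A) (2*(n'+A)+1),
      max (2*((2*n'+1 : ℕ):ℤ)+1) (min (2*((2*n'+1 : ℕ):ℤ) + 2*(j:ℤ) + 1)
        (2*((2*(n'+A)+1 : ℕ):ℤ) - 2*(j:ℤ) - 1))
      = ∑ k ∈ Finset.range (2*n'+1), ((4*(n':ℤ)+3) + 0 * (k:ℤ)) := by
    rw [Finset.sum_Ico_eq_sum_range, show 2*(n'+A)+1 - 2*A = 2*n'+1 by omega]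
    refine Finset.sum_congr rfl fun k hk => ?_
    rw [Finset.mem_range] at hk
    push_cast
    omega
  rw [e1, e2, e3]
  have hs1 := sum_linear (4*(n':ℤ)+3) 2 A
  have hs2 := sum_linear (4*(n':ℤ) + 2*(A:ℤ) + 1) (-2) A
  have hs3 := sum_linear (4*(n':ℤ)+3) 0 (2*n'+1)
  push_cast at hs1 hs2 hs3 ⊢
  linear_combination hs1 + hs2 + hs3

/-- Let `n` and `h` be odd, `h ≥ 2`, `n ≥ 1`, and `h > n + 2`.
Then for any vertex `u ∈ V⁰₀` of `ZT(n,h)`, the sum of the distances from `u` to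
the vertices of `V¹ₙ` equals `½(h² + 2hn + n² + 2n)`. -/
theorem dist_sum_V1n (n h : ℕ) (hn : 1 ≤ n) (hh : 2 ≤ h)
    (hnodd : Odd n) (hhodd : Odd h) (hgt : n + 2 < h)
    (u : ZTVert n h) (hu : u ∈ ZTVset n h 0 0) :
    ∑ᶠ y ∈ ZTVset n h 1 n, ((ZT n h).dist u y : ℝ) =
      ((h : ℝ) ^ 2 + 2 * h * n + (n : ℝ) ^ 2 + 2 * n) / 2 := by
  haveI : NeZero h := ⟨by omega⟩
  obtain ⟨uk, ui, a⟩ := u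
  obtain ⟨hk, hi⟩ := hu
  simp only at hk hi
  subst hk
  have hui : ui = ⟨0, Nat.succ_pos n⟩ := Fin.ext hi
  subst hui
  -- the vertex set as a finset image
  set g : ZMod h → ZTVert n h := fun b => (1, ⟨n, Nat.lt_succ_self n⟩, b) with hg
  have hset : ZTVset n h 1 n = ↑(Finset.image g Finset.univ) := by
    ext ⟨k, i, c⟩
    simp only [ZTVset, Set.mem_setOf_eq, Finset.coe_image, Finset.coe_univ, Set.image_univ,
      Set.mem_range, hg]
    constructor
    · rintro ⟨rfl, hi2⟩
      exact ⟨c, by rw [Prod.mk.injEq, Prod.mk.injEq]; exact ⟨rfl, Fin.ext hi2.symm, rfl⟩⟩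
    · rintro ⟨b, hb⟩
      rw [Prod.mk.injEq, Prod.mk.injEq] at hb
      exact ⟨hb.1.symm, by rw [← hb.2.1]⟩
  rw [hset, finsum_mem_coe_finset]
  rw [Finset.sum_image (fun b _ b' _ hbe => by
    have := congrArg (fun v : ZTVert n h => v.2.2) hbe
    simpa [hg] using this)]
  -- integer-valued sum
  have hZ : ∑ b : ZMod h, ((ZT n h).dist (0, ⟨0, Nat.succ_pos n⟩, a) (g b) : ℤ)
      = ∑ j ∈ Finset.range h,
          max (2*(n:ℤ)+1) (min (2*(n:ℤ) + 2*(j:ℤ) + 1) (2*(h:ℤ) - 2*(j:ℤ) - 1)) := by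
    have step1 : ∑ b : ZMod h, ((ZT n h).dist (0, ⟨0, Nat.succ_pos n⟩, a) (g b) : ℤ)
        = ∑ b : ZMod h,
            max (2*(n:ℤ)+1) (min (2*(n:ℤ) + 2*(((b-a).val:ℕ):ℤ) + 1)
              (2*(h:ℤ) - 2*(((b-a).val:ℕ):ℤ) - 1)) :=
      Finset.sum_congr rfl fun b _ => dist_formula hn hgt a b
    rw [step1]
    have step2 : ∑ b : ZMod h,
        max (2*(n:ℤ)+1) (min (2*(n:ℤ) + 2*(((b-a).val:ℕ):ℤ) + 1)
          (2*(h:ℤ) - 2*(((b-a).val:ℕ):ℤ) - 1))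
        = ∑ c : ZMod h,
            max (2*(n:ℤ)+1) (min (2*(n:ℤ) + 2*((c.val:ℕ):ℤ) + 1)
              (2*(h:ℤ) - 2*((c.val:ℕ):ℤ) - 1)) :=
      Fintype.sum_equiv (Equiv.subRight a) _ _ fun b => rfl
    rw [step2]
    refine Finset.sum_nbij' (fun c => c.val) (fun j => (j : ZMod h)) ?_ ?_ ?_ ?_ ?_
    · intro c _; exact Finset.mem_range.mpr (ZMod.val_lt c)
    · intro j _; exact Finset.mem_univ _
    · intro c _; exact ZMod.natCast_rightInverse c
    · intro j hj; exact ZMod.val_cast_of_lt (Finset.mem_range.mp hj)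
    · intro c _; rfl
  -- conclude over ℝ
  have hsum := sum_formula n h hn hnodd hhodd hgt
  have hcast : (∑ b : ZMod h, ((ZT n h).dist (0, ⟨0, Nat.succ_pos n⟩, a) (g b) : ℝ))
      = ((∑ j ∈ Finset.range h,
          max (2*(n:ℤ)+1) (min (2*(n:ℤ) + 2*(j:ℤ) + 1) (2*(h:ℤ) - 2*(j:ℤ) - 1)) : ℤ) : ℝ) := by
    rw [← hZ]
    push_cast
    rfl
  rw [hcast]
  set S : ℤ := ∑ j ∈ Finset.range h,
      max (2*(n:ℤ)+1) (min (2*(n:ℤ) + 2*(j:ℤ) + 1) (2*(h:ℤ) - 2*(j:ℤ) - 1)) with hS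
  have := congrArg (fun z : ℤ => (z : ℝ)) hsum
  push_cast at this
  linarith
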